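/- arXiv:1905.11183 — 2 statements merged into one kernel-verified Lean document; each statement's English description precedes it below -/
import Mathlib

section
/- For integers 1 ≤ i ≤ n, Σ_{k ≤ n, i ∥ k} M*(n/k, k) = 1, where M*(x, k) = Σ_{d ≤ x, gcd(d,k)=1} μ*(d). -/
/-- `d` is a unitary divisor of `j`: `d ∣ j` and `gcd(d, j/d) = 1`. -/
def UnitaryDvd (d j : ℕ) : Prop := d ∣ j ∧ Nat.Coprime d (j / d)

instance : ∀ d j, Decidable (UnitaryDvd d j) := fun _ _ => instDecidableAnd

/-- The unitary Möbius function `μ*(n) = (-1)^{ω(n)}`. -/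
noncomputable def mustar (n : ℕ) : ℤ := (-1) ^ n.primeFactors.card

/-- `M*(x, k) = ∑_{d ≤ x, gcd(d,k)=1} μ*(d)`. -/
noncomputable def Mstar (x k : ℕ) : ℤ :=
  ∑ d ∈ (Finset.Icc 1 x).filter (fun d => Nat.Coprime d k), mustar d

open Finset

lemma prod_pow_factorization_primeFactors {s : ℕ} (hs : s ≠ 0) :
    ∏ p ∈ s.primeFactors, p ^ s.factorization p = s := by
  have := Nat.factorization_prod_pow_eq_self hs
  rwa [Finsupp.prod] at this

lemma prod_pow_ne_zero {s : ℕ} {T : Finset ℕ} (hT : T ⊆ s.primeFactors) :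
    ∏ p ∈ T, p ^ s.factorization p ≠ 0 := by
  refine Finset.prod_ne_zero_iff.mpr fun p hp => ?_
  exact pow_ne_zero _ (Nat.Prime.ne_zero (Nat.prime_of_mem_primeFactors (hT hp)))

lemma primeFactors_prod_pow {s : ℕ} {T : Finset ℕ} (hT : T ⊆ s.primeFactors) :
    (∏ p ∈ T, p ^ s.factorization p).primeFactors = T := by
  classical
  induction T using Finset.induction_on with
  | empty => simp
  | @insert p T hp ih =>
    rw [Finset.prod_insert hp]
    have hpmem := hT (Finset.mem_insert_self p T)
    have hpp := Nat.prime_of_mem_primeFactors hpmem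
    have hv : s.factorization p ≠ 0 :=
      Finsupp.mem_support_iff.mp ((Nat.support_factorization s).symm ▸ hpmem)
    have hT' : T ⊆ s.primeFactors := fun q hq => hT (Finset.mem_insert_of_mem hq)
    rw [Nat.primeFactors_mul (pow_ne_zero _ hpp.ne_zero) (prod_pow_ne_zero hT'),
      Nat.primeFactors_pow _ hv, hpp.primeFactors, ih hT']
    rfl

lemma prod_pow_dvd {s : ℕ} (hs : s ≠ 0) {T : Finset ℕ} (hT : T ⊆ s.primeFactors) :
    ∏ p ∈ T, p ^ s.factorization p ∣ s := by
  conv_rhs => rw [← prod_pow_factorization_primeFactors hs]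
  exact Finset.prod_dvd_prod_of_subset _ _ _ hT

lemma factorization_eq_of_unitary {s d : ℕ} (hs : s ≠ 0) (hdvd : d ∣ s)
    (hcop : Nat.Coprime d (s / d)) {p : ℕ} (hp : p ∈ d.primeFactors) :
    d.factorization p = s.factorization p := by
  have hd0 : d ≠ 0 := fun h => hs (by simpa [h] using hdvd)
  have hq0 : s / d ≠ 0 := Nat.div_ne_zero_iff.mpr ⟨hd0, Nat.le_of_dvd (Nat.pos_of_ne_zero hs) hdvd⟩
  have hpp := Nat.prime_of_mem_primeFactors hp
  have hnd : ¬ p ∣ (s / d) := by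
    intro h
    have : p ∣ 1 := hcop ▸ Nat.dvd_gcd (Nat.dvd_of_mem_primeFactors hp) h
    exact hpp.one_lt.ne' (Nat.dvd_one.mp this)
  conv_rhs => rw [show s = d * (s / d) from (Nat.mul_div_cancel' hdvd).symm]
  rw [Nat.factorization_mul hd0 hq0]
  simp [Nat.factorization_eq_zero_of_not_dvd hnd]

lemma sum_mustar_unitary (s : ℕ) (hs : s ≠ 0) :
    ∑ d ∈ s.divisors.filter (fun d => Nat.Coprime d (s / d)), mustar d
      = if s = 1 then 1 else 0 := by
  classical
  have h1 : (if s = 1 then (1:ℤ) else 0) = (if s.primeFactors = ∅ then 1 else 0) := by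
    simp [Nat.primeFactors_eq_empty, hs]
  rw [h1, ← Finset.sum_powerset_neg_one_pow_card]
  refine Finset.sum_nbij' (i := fun d => d.primeFactors)
    (j := fun T => ∏ p ∈ T, p ^ s.factorization p) ?_ ?_ ?_ ?_ ?_
  · intro d hd
    simp only [Finset.mem_filter, Nat.mem_divisors] at hd
    exact Finset.mem_powerset.mpr (Nat.primeFactors_mono hd.1.1 hs)
  · intro T hT
    rw [Finset.mem_powerset] at hT
    have hdvd := prod_pow_dvd hs hT
    refine Finset.mem_filter.mpr ⟨Nat.mem_divisors.mpr ⟨hdvd, hs⟩, ?_⟩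
    have hsplit : (∏ p ∈ s.primeFactors \ T, p ^ s.factorization p)
        * ∏ p ∈ T, p ^ s.factorization p = s := by
      rw [Finset.prod_sdiff hT]; exact prod_pow_factorization_primeFactors hs
    have hq : s / (∏ p ∈ T, p ^ s.factorization p)
        = ∏ p ∈ s.primeFactors \ T, p ^ s.factorization p := by
      exact Nat.div_eq_of_eq_mul_left (Nat.pos_of_ne_zero (prod_pow_ne_zero hT)) hsplit.symm
    rw [hq]
    refine (Nat.disjoint_primeFactors (prod_pow_ne_zero hT)
      (prod_pow_ne_zero (Finset.sdiff_subset))).mp ?_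
    rw [primeFactors_prod_pow hT, primeFactors_prod_pow (Finset.sdiff_subset)]
    exact Finset.disjoint_sdiff
  · intro d hd
    simp only [Finset.mem_filter, Nat.mem_divisors] at hd
    have hd0 : d ≠ 0 := fun h => hs (by simpa [h] using hd.1.1)
    conv_rhs => rw [← prod_pow_factorization_primeFactors hd0]
    exact Finset.prod_congr rfl fun p hp =>
      by rw [factorization_eq_of_unitary hs hd.1.1 hd.2 hp]
  · intro T hT
    exact primeFactors_prod_pow (Finset.mem_powerset.mp hT)
  · intro d _
    rfl

lemma div_eq_mul_div_div {i d m : ℕ} (hd0 : d ≠ 0) (him : i ∣ m) (hd : d ∣ m / i) :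
    m / d = i * (m / i / d) := by
  have h1 : m = i * (m / i / d) * d := by
    conv_lhs => rw [← Nat.div_mul_cancel him, ← Nat.div_mul_cancel hd]
    ring
  exact Nat.div_eq_of_eq_mul_left (Nat.pos_of_ne_zero hd0) h1

lemma mustar_inner_sum (i m : ℕ) (hi : 1 ≤ i) (hm : m ≠ 0) (him : i ∣ m)
    (hcop : Nat.Coprime i (m / i)) :
    ∑ d ∈ m.divisors.filter (fun d => Nat.Coprime d (m / d) ∧ Nat.Coprime d i), mustar d
      = if m = i then 1 else 0 := by
  have hi0 : i ≠ 0 := by omega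
  have hmi0 : m / i ≠ 0 := Nat.div_ne_zero_iff.mpr ⟨hi0, Nat.le_of_dvd (Nat.pos_of_ne_zero hm) him⟩
  have hset : m.divisors.filter (fun d => Nat.Coprime d (m / d) ∧ Nat.Coprime d i)
      = (m / i).divisors.filter (fun d => Nat.Coprime d (m / i / d)) := by
    ext d
    simp only [Finset.mem_filter, Nat.mem_divisors]
    constructor
    · rintro ⟨⟨hdm, _⟩, hcd, hdi⟩
      have hd0 : d ≠ 0 := fun h => hm (by simpa [h] using hdm)
      have hd2 : d ∣ m / i := by
        refine hdi.dvd_of_dvd_mul_right ?_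
        rwa [Nat.div_mul_cancel him]
      have hmd := div_eq_mul_div_div hd0 him hd2
      refine ⟨⟨hd2, hmi0⟩, ?_⟩
      exact Nat.Coprime.coprime_dvd_right ⟨i, by rw [hmd]; ring⟩ hcd
    · rintro ⟨⟨hd2, _⟩, hcd⟩
      have hd0 : d ≠ 0 := fun h => hmi0 (by simpa [h] using hd2)
      have hdm : d ∣ m := hd2.trans (Nat.div_dvd_of_dvd him)
      have hmd := div_eq_mul_div_div hd0 him hd2
      have hdi : Nat.Coprime d i := Nat.Coprime.coprime_dvd_left hd2 hcop.symm
      refine ⟨⟨hdm, hm⟩, ?_, hdi⟩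
      rw [hmd]
      exact Nat.Coprime.mul_right hdi hcd
  rw [hset, sum_mustar_unitary _ hmi0]
  have heq : m / i = 1 ↔ m = i := by
    constructor
    · intro h
      conv_lhs => rw [← Nat.div_mul_cancel him, h, one_mul]
    · intro h
      rw [h, Nat.div_self (by omega)]
  simp [heq]

theorem sum_Mstar_unitary (i n : ℕ) (hi : 1 ≤ i) (hin : i ≤ n) :
    ∑ k ∈ (Finset.Icc 1 n).filter (fun k => UnitaryDvd i k), Mstar (n / k) k = 1 := by
  classical
  have hstep : ∀ m ∈ (Finset.Icc 1 n).filter (fun m => UnitaryDvd i m),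
      (∑ d ∈ m.divisors.filter (fun d => Nat.Coprime d (m / d) ∧ Nat.Coprime d i), mustar d)
        = if m = i then 1 else 0 := by
    intro m hm
    simp only [Finset.mem_filter, Finset.mem_Icc] at hm
    simp only [UnitaryDvd] at hm
    exact mustar_inner_sum i m hi (by omega) hm.2.1 hm.2.2
  have key : ∑ m ∈ (Finset.Icc 1 n).filter (fun m => UnitaryDvd i m),
      (∑ d ∈ m.divisors.filter (fun d => Nat.Coprime d (m / d) ∧ Nat.Coprime d i), mustar d)
      = 1 := by
    rw [Finset.sum_congr rfl hstep, Finset.sum_ite_eq' _ i (fun _ => (1:ℤ)), if_pos]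
    simp only [Finset.mem_filter, Finset.mem_Icc]
    exact ⟨⟨hi, hin⟩, dvd_refl i, by simp [Nat.div_self (by omega : 0 < i), Nat.coprime_one_right]⟩
  calc ∑ k ∈ (Finset.Icc 1 n).filter (fun k => UnitaryDvd i k), Mstar (n / k) k
      = ∑ x ∈ ((Finset.Icc 1 n).filter (fun k => UnitaryDvd i k)).sigma
          (fun k => (Finset.Icc 1 (n / k)).filter (fun d => Nat.Coprime d k)),
          mustar x.2 := by
        rw [Finset.sum_sigma]
        rfl
    _ = ∑ x ∈ ((Finset.Icc 1 n).filter (fun m => UnitaryDvd i m)).sigma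
          (fun m => m.divisors.filter (fun d => Nat.Coprime d (m / d) ∧ Nat.Coprime d i)),
          mustar x.2 := by
        refine Finset.sum_nbij' (i := fun x => ⟨x.1 * x.2, x.2⟩)
          (j := fun x => ⟨x.1 / x.2, x.2⟩) ?_ ?_ ?_ ?_ ?_
        · rintro ⟨k, d⟩ hx
          simp only [Finset.mem_sigma, Finset.mem_filter, Finset.mem_Icc, Nat.mem_divisors] at hx ⊢
          simp only [UnitaryDvd] at hx ⊢
          obtain ⟨⟨⟨hk1, hkn⟩, hik, hcik⟩, ⟨hd1, hdn⟩, hdk⟩ := hx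
          have hkd : k * d ≤ n := by
            rw [mul_comm]; exact (Nat.le_div_iff_mul_le (by omega)).mp hdn
          have hdi : Nat.Coprime d i := Nat.Coprime.coprime_dvd_right hik hdk
          refine ⟨⟨⟨?_, hkd⟩, Dvd.dvd.mul_right hik d, ?_⟩,
            ⟨Dvd.intro_left k rfl, by positivity⟩, ?_, hdi⟩
          · exact Nat.one_le_iff_ne_zero.mpr (by positivity)
          · obtain ⟨t, rfl⟩ := hik
            rw [Nat.mul_div_cancel_left _ (by omega : 0 < i)] at hcik
            rw [mul_assoc, Nat.mul_div_cancel_left _ (by omega : 0 < i)]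
            exact hcik.mul_right hdi.symm
          · rw [mul_comm, Nat.mul_div_cancel_left _ (by omega : 0 < d)]
            exact hdk
        · rintro ⟨m, d⟩ hx
          simp only [Finset.mem_sigma, Finset.mem_filter, Finset.mem_Icc, Nat.mem_divisors] at hx ⊢
          simp only [UnitaryDvd] at hx ⊢
          obtain ⟨⟨⟨hm1, hmn⟩, him, hcim⟩, ⟨hdm, hm0⟩, hcd, hdi⟩ := hx
          have hd0 : d ≠ 0 := fun h => hm0 (by simpa [h] using hdm)
          have hd2 : d ∣ m / i := by
            refine hdi.dvd_of_dvd_mul_right ?_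
            rwa [Nat.div_mul_cancel him]
          have hmd := div_eq_mul_div_div hd0 him hd2
          have hmdpos : 0 < m / d :=
            Nat.div_pos (Nat.le_of_dvd (by omega) hdm) (by omega)
          refine ⟨⟨⟨hmdpos, le_trans (Nat.div_le_self m d) hmn⟩, ?_, ?_⟩,
            ⟨Nat.one_le_iff_ne_zero.mpr hd0, ?_⟩, hcd⟩
          · rw [hmd]; exact dvd_mul_right i _
          · rw [hmd, Nat.mul_div_cancel_left _ (by omega : 0 < i)]
            exact hcim.coprime_dvd_right (Nat.div_dvd_of_dvd hd2)
          · rw [Nat.le_div_iff_mul_le hmdpos, Nat.mul_div_cancel' hdm]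
            exact hmn
        · rintro ⟨k, d⟩ hx
          simp only [Finset.mem_sigma, Finset.mem_filter, Finset.mem_Icc] at hx
          have hd0 : 0 < d := hx.2.1.1
          have hkd : k * d / d = k := by
            rw [mul_comm]; exact Nat.mul_div_cancel_left _ hd0
          simp [hkd]
        · rintro ⟨m, d⟩ hx
          simp only [Finset.mem_sigma, Finset.mem_filter, Nat.mem_divisors] at hx
          simp [Nat.div_mul_cancel hx.2.1.1]
        · rintro ⟨k, d⟩ _
          rfl
    _ = 1 := by
        rw [Finset.sum_sigma]
        exact key
end

section
/- For any integer n ≥ 2, the determinant of the n×n matrix R*_n with entries (R*_n)_{ij} = 1 if i ∥ j or j = 1 and 0 otherwise, equals M*(n) = Σ_{k=1}^{n} (-1)^{ω(k)}. -/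
open Finset

lemma udvd_one_left (j : ℕ) : UnitaryDvd 1 j := ⟨one_dvd j, Nat.coprime_one_left _⟩

lemma udvd_refl {a : ℕ} (ha : 0 < a) : UnitaryDvd a a :=
  ⟨dvd_rfl, by simp [Nat.div_self ha]⟩

lemma coprime_of_no_common_prime {a b : ℕ}
    (h : ∀ p, p.Prime → p ∣ a → p ∣ b → False) : Nat.Coprime a b := by
  by_contra hg
  obtain ⟨p, hp, hpd⟩ := Nat.exists_prime_and_dvd hg
  exact h p hp (hpd.trans (Nat.gcd_dvd_left _ _)) (hpd.trans (Nat.gcd_dvd_right _ _))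

lemma udvd_factorization {e m : ℕ} (hm : m ≠ 0) (h : UnitaryDvd e m) {p : ℕ}
    (hp : p ∈ e.primeFactors) : e.factorization p = m.factorization p := by
  obtain ⟨hdvd, hcop⟩ := h
  have he : e ≠ 0 := by rintro rfl; exact hm (Nat.eq_zero_of_zero_dvd hdvd)
  have hpp : p.Prime := Nat.prime_of_mem_primeFactors hp
  have hpe : p ∣ e := Nat.dvd_of_mem_primeFactors hp
  have hnd : ¬ p ∣ (m / e) := fun hd =>
    hpp.ne_one (Nat.eq_one_of_dvd_one (hcop.gcd_eq_one ▸ Nat.dvd_gcd hpe hd))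
  have h0 : (m / e).factorization p = 0 := Nat.factorization_eq_zero_of_not_dvd hnd
  rw [Nat.factorization_div hdvd] at h0
  have hle : e.factorization p ≤ m.factorization p :=
    (Nat.factorization_le_iff_dvd he hm).2 hdvd p
  simp only [Finsupp.tsub_apply] at h0
  omega

lemma udvd_trans {a k b : ℕ} (ha : 0 < a) (hk : 0 < k) :
    UnitaryDvd a k → UnitaryDvd k b → UnitaryDvd a b := by
  rintro ⟨hak, h1⟩ ⟨hkb, h2⟩
  refine ⟨hak.trans hkb, ?_⟩
  have hkey : b / a = (k / a) * (b / k) := by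
    obtain ⟨s, rfl⟩ := hak
    obtain ⟨t, rfl⟩ := hkb
    have h1 : a * s * t / a = s * t := by rw [mul_assoc, Nat.mul_div_cancel_left _ ha]
    have h2 : a * s / a = s := Nat.mul_div_cancel_left _ ha
    have h3 : a * s * t / (a * s) = t := Nat.mul_div_cancel_left _ hk
    rw [h1, h2, h3]
  rw [hkey]
  exact h1.mul_right (Nat.Coprime.coprime_dvd_left hak h2)

lemma udvd_mul_iff {a m e : ℕ} (ha : 0 < a) (hcop : Nat.Coprime a m) :
    (UnitaryDvd a (a * e) ∧ UnitaryDvd (a * e) (a * m)) ↔ UnitaryDvd e m := by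
  constructor
  · rintro ⟨-, hdvd, hc⟩
    have hem : e ∣ m := (mul_dvd_mul_iff_left ha.ne').1 hdvd
    refine ⟨hem, ?_⟩
    rw [Nat.mul_div_mul_left _ _ ha] at hc
    exact Nat.Coprime.coprime_dvd_left (dvd_mul_left e a) hc
  · rintro ⟨hem, hc⟩
    refine ⟨⟨dvd_mul_right a e, ?_⟩, mul_dvd_mul_left a hem, ?_⟩
    · rw [Nat.mul_div_cancel_left _ ha]
      exact hcop.coprime_dvd_right hem
    · rw [Nat.mul_div_mul_left _ _ ha]
      exact Nat.Coprime.mul (hcop.coprime_dvd_right (Nat.div_dvd_of_dvd hem)) hc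


lemma fact_jS {m : ℕ} {S : Finset ℕ} (hS : S ⊆ m.primeFactors) (q : ℕ) :
    (∏ p ∈ S, p ^ m.factorization p).factorization q
      = if q ∈ S then m.factorization q else 0 := by
  have hne : ∀ p ∈ S, p ^ m.factorization p ≠ 0 :=
    fun p hp => pow_ne_zero _ (Nat.prime_of_mem_primeFactors (hS hp)).pos.ne'
  rw [Nat.factorization_prod hne]
  rw [Finset.sum_apply']
  rw [Finset.sum_congr rfl (fun p hp => by
    rw [(Nat.prime_of_mem_primeFactors (hS hp)).factorization_pow, Finsupp.single_apply])]
  exact Finset.sum_ite_eq' S q _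

lemma sum_mustar_udvd {m : ℕ} (hm : 0 < m) :
    ∑ e ∈ (Icc 1 m).filter (fun e => UnitaryDvd e m), mustar e
      = if m = 1 then 1 else 0 := by
  have hm0 : m ≠ 0 := hm.ne'
  have key : ∑ e ∈ (Icc 1 m).filter (fun e => UnitaryDvd e m), mustar e
      = ∑ S ∈ m.primeFactors.powerset, (-1 : ℤ) ^ S.card := by
    refine Finset.sum_nbij' (fun e => e.primeFactors)
      (fun S => ∏ p ∈ S, p ^ m.factorization p) ?_ ?_ ?_ ?_ ?_
    · intro e he
      rw [mem_filter, mem_Icc] at he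
      exact Finset.mem_powerset.2 (Nat.primeFactors_mono he.2.1 hm0)
    · intro S hS
      rw [Finset.mem_powerset] at hS
      have hne : (∏ p ∈ S, p ^ m.factorization p) ≠ 0 := by
        refine Finset.prod_ne_zero_iff.2 fun p hp =>
          pow_ne_zero _ (Nat.prime_of_mem_primeFactors (hS hp)).pos.ne'
      have hdvd : (∏ p ∈ S, p ^ m.factorization p) ∣ m := by
        rw [← Nat.factorization_le_iff_dvd hne hm0, Finsupp.le_def]
        intro q
        rw [fact_jS hS]
        split <;> simp
      rw [mem_filter, mem_Icc]
      refine ⟨⟨Nat.one_le_iff_ne_zero.2 hne, Nat.le_of_dvd hm hdvd⟩, hdvd, ?_⟩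
      refine coprime_of_no_common_prime fun p hp hp1 hp2 => ?_
      have hpS : p ∈ S := by
        have := (Nat.Prime.factorization_pos_of_dvd hp hne hp1)
        rw [fact_jS hS] at this
        by_contra hc; simp [hc] at this
      have h2 : (m / (∏ p ∈ S, p ^ m.factorization p)).factorization p = 0 := by
        rw [Nat.factorization_div hdvd, Finsupp.tsub_apply, fact_jS hS, if_pos hpS]
        omega
      have hq : 0 < m / (∏ p ∈ S, p ^ m.factorization p) :=
        Nat.div_pos (Nat.le_of_dvd hm hdvd) (Nat.pos_of_ne_zero hne)
      have := Nat.Prime.factorization_pos_of_dvd hp hq.ne' hp2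
      omega
    · intro e he
      rw [mem_filter, mem_Icc] at he
      have he0 : e ≠ 0 := by omega
      calc ∏ p ∈ e.primeFactors, p ^ m.factorization p
          = ∏ p ∈ e.primeFactors, p ^ e.factorization p :=
            Finset.prod_congr rfl fun p hp => by rw [udvd_factorization hm0 he.2 hp]
        _ = e := Nat.factorization_prod_pow_eq_self he0
    · intro S hS
      rw [Finset.mem_powerset] at hS
      show (∏ p ∈ S, p ^ m.factorization p).primeFactors = S
      ext q
      rw [← Nat.support_factorization, Finsupp.mem_support_iff, fact_jS hS]
      constructor
      · intro h; by_contra hc; simp [hc] at h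
      · intro hq
        rw [if_pos hq]
        exact (Nat.prime_of_mem_primeFactors (hS hq)).factorization_pos_of_dvd hm0
          (Nat.dvd_of_mem_primeFactors (hS hq)) |>.ne'
    · intro e _; rfl
  rw [key, Finset.sum_powerset_neg_one_pow_card]
  congr 1
  simp only [Nat.primeFactors_eq_empty, eq_iff_iff]
  omega


lemma key_sum {a b : ℕ} (ha : 0 < a) (hb : 0 < b) :
    ∑ k ∈ Icc 1 b, (if UnitaryDvd a k ∧ UnitaryDvd k b then mustar (k / a) else 0)
      = if a = b then 1 else 0 := by
  by_cases hab : UnitaryDvd a b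
  · obtain ⟨⟨m, rfl⟩, hcop⟩ := hab
    rw [Nat.mul_div_cancel_left _ ha] at hcop
    have hm : 0 < m := Nat.pos_of_ne_zero (fun h => by simp [h] at hb)
    have step1 : ∑ k ∈ (Icc 1 (a*m)).filter (a ∣ ·),
        (if UnitaryDvd a k ∧ UnitaryDvd k (a*m) then mustar (k / a) else 0)
        = ∑ k ∈ Icc 1 (a*m),
        (if UnitaryDvd a k ∧ UnitaryDvd k (a*m) then mustar (k / a) else 0) := by
      refine Finset.sum_filter_of_ne fun k _ h => ?_
      by_contra hd
      exact h (if_neg (fun hc => hd hc.1.1))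
    have step2 : ∑ k ∈ (Icc 1 (a*m)).filter (a ∣ ·),
        (if UnitaryDvd a k ∧ UnitaryDvd k (a*m) then mustar (k / a) else 0)
        = ∑ e ∈ Icc 1 m, (if UnitaryDvd e m then mustar e else 0) := by
      refine Finset.sum_nbij' (fun k => k / a) (fun e => a * e) ?_ ?_ ?_ ?_ ?_
      · intro k hk
        simp only [mem_filter, mem_Icc] at hk
        obtain ⟨⟨h1, h2⟩, hd⟩ := hk
        rw [mem_Icc]
        refine ⟨(Nat.one_le_div_iff ha).2 (Nat.le_of_dvd (by omega) hd), ?_⟩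
        calc k / a ≤ a * m / a := Nat.div_le_div_right h2
          _ = m := Nat.mul_div_cancel_left _ ha
      · intro e he
        rw [mem_Icc] at he
        simp only [mem_filter, mem_Icc]
        exact ⟨⟨Nat.one_le_iff_ne_zero.2 (Nat.mul_ne_zero ha.ne' (by omega)),
          Nat.mul_le_mul_left a he.2⟩, dvd_mul_right a e⟩
      · intro k hk
        simp only [mem_filter] at hk
        exact Nat.mul_div_cancel' hk.2
      · intro e _
        exact Nat.mul_div_cancel_left _ ha
      · intro k hk
        simp only [mem_filter, mem_Icc] at hk
        obtain ⟨e, rfl⟩ := hk.2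
        simp only [Nat.mul_div_cancel_left _ ha]
        by_cases h : UnitaryDvd e m
        · rw [if_pos ((udvd_mul_iff ha hcop).2 h), if_pos h]
        · rw [if_neg (fun hc => h ((udvd_mul_iff ha hcop).1 hc)), if_neg h]
    rw [← step1, step2, ← Finset.sum_filter, sum_mustar_udvd hm]
    rcases eq_or_ne m 1 with h | h
    · simp [h]
    · rw [if_neg h, if_neg (fun hc => h ((Nat.mul_eq_left ha.ne').1 hc.symm))]
  · have hne : a ≠ b := fun h => hab (h ▸ udvd_refl ha)
    rw [if_neg hne]
    refine Finset.sum_eq_zero fun k hk => ?_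
    rw [mem_Icc] at hk
    rw [if_neg]
    rintro ⟨h1, h2⟩
    exact hab (udvd_trans ha (by omega) h1 h2)


theorem det_redheffer_star (n : ℕ) (hn : 2 ≤ n) :
    Matrix.det (Matrix.of fun i j : Fin n =>
        if UnitaryDvd ((i : ℕ) + 1) ((j : ℕ) + 1) ∨ (j : ℕ) + 1 = 1 then (1 : ℤ) else 0) =
      ∑ k ∈ Finset.Icc 1 n, (-1 : ℤ) ^ k.primeFactors.card := by
  have hn0 : 0 < n := by omega
  set R : Matrix (Fin n) (Fin n) ℤ := Matrix.of fun i j : Fin n =>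
      if UnitaryDvd ((i : ℕ) + 1) ((j : ℕ) + 1) ∨ (j : ℕ) + 1 = 1 then (1 : ℤ) else 0 with hR
  set U : Matrix (Fin n) (Fin n) ℤ := Matrix.of fun i k : Fin n =>
      if UnitaryDvd ((i : ℕ) + 1) ((k : ℕ) + 1) then mustar (((k : ℕ) + 1) / ((i : ℕ) + 1))
      else 0 with hU
  -- U is upper triangular with 1s on the diagonal
  have hUtri : U.BlockTriangular id := by
    intro i k h
    simp only [id_eq] at h
    have : ¬ UnitaryDvd ((i : ℕ) + 1) ((k : ℕ) + 1) := by
      rintro ⟨hd, -⟩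
      have := Nat.le_of_dvd (by omega) hd
      omega
    simp [hU, this]
  have hUdet : U.det = 1 := by
    rw [Matrix.det_of_upperTriangular hUtri]
    refine Finset.prod_eq_one fun i _ => ?_
    have : UnitaryDvd ((i : ℕ) + 1) ((i : ℕ) + 1) := ⟨dvd_rfl, by simp⟩
    simp [hU, this, Nat.div_self (Nat.succ_pos _), mustar]
  -- the product U * R
  have hkey : ∀ (i j : Fin n), (U * R) i j =
      if (j : ℕ) = 0 then
        (∑ k ∈ Icc 1 n, if UnitaryDvd ((i : ℕ) + 1) k then mustar (k / ((i : ℕ) + 1)) else 0)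
      else if i = j then 1 else 0 := by
    intro i j
    rw [Matrix.mul_apply]
    have hconv : ∀ (g : ℕ → ℤ), (∑ k : Fin n, g ((k : ℕ) + 1)) = ∑ k ∈ Icc 1 n, g k := by
      intro g
      refine Finset.sum_nbij' (fun k : Fin n => (k : ℕ) + 1)
        (fun c => (⟨min (c - 1) (n - 1), by omega⟩ : Fin n)) ?_ ?_ ?_ ?_ ?_
      · intro k _
        rw [mem_Icc]
        have := k.isLt
        show 1 ≤ (k : ℕ) + 1 ∧ (k : ℕ) + 1 ≤ n
        omega
      · intro c _
        exact Finset.mem_univ _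
      · intro k _
        have hk := k.isLt
        apply Fin.ext
        show min ((k : ℕ) + 1 - 1) (n - 1) = (k : ℕ)
        rw [Nat.add_sub_cancel]
        exact Nat.min_eq_left (by omega)
      · intro c hc
        rw [mem_Icc] at hc
        show min (c - 1) (n - 1) + 1 = c
        omega
      · intro k _
        rfl
    by_cases hj : (j : ℕ) = 0
    · rw [if_pos hj]
      have : ∀ k : Fin n, R k j = 1 := fun k => by simp [hR, hj]
      calc ∑ k : Fin n, U i k * R k j = ∑ k : Fin n, U i k := by
            simp only [this, mul_one]
        _ = _ := hconv (fun c => if UnitaryDvd ((i : ℕ) + 1) c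
            then mustar (c / ((i : ℕ) + 1)) else 0)
    · rw [if_neg hj]
      have hstep : ∀ k : Fin n, U i k * R k j =
          (fun c => if UnitaryDvd ((i : ℕ) + 1) c ∧ UnitaryDvd c ((j : ℕ) + 1)
            then mustar (c / ((i : ℕ) + 1)) else 0) ((k : ℕ) + 1) := by
        intro k
        have hj1 : ¬ ((j : ℕ) + 1 = 1) := by omega
        simp only [hU, hR, Matrix.of_apply, hj1, or_false]
        split_ifs with h1 h2 h3 h3 <;> simp_all
      rw [show (∑ k : Fin n, U i k * R k j) = ∑ k ∈ Icc 1 n,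
          (if UnitaryDvd ((i : ℕ) + 1) k ∧ UnitaryDvd k ((j : ℕ) + 1)
            then mustar (k / ((i : ℕ) + 1)) else 0) from
        (Finset.sum_congr rfl fun k _ => hstep k).trans
          (hconv (fun c => if UnitaryDvd ((i : ℕ) + 1) c ∧ UnitaryDvd c ((j : ℕ) + 1)
            then mustar (c / ((i : ℕ) + 1)) else 0))]
      have hsub : ∑ k ∈ Icc 1 n, (if UnitaryDvd ((i : ℕ) + 1) k ∧ UnitaryDvd k ((j : ℕ) + 1)
            then mustar (k / ((i : ℕ) + 1)) else 0)
          = ∑ k ∈ Icc 1 ((j : ℕ) + 1), (if UnitaryDvd ((i : ℕ) + 1) k ∧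
            UnitaryDvd k ((j : ℕ) + 1) then mustar (k / ((i : ℕ) + 1)) else 0) := by
        refine (Finset.sum_subset (Finset.Icc_subset_Icc_right (by omega)) ?_).symm
        intro k hk hnk
        simp only [mem_Icc] at hk hnk
        rw [if_neg]
        rintro ⟨-, hd, -⟩
        have := Nat.le_of_dvd (by omega) hd
        omega
      rw [hsub, key_sum (by omega) (by omega)]
      congr 1
      simp only [eq_iff_iff]
      constructor
      · intro h; exact Fin.ext (by omega)
      · intro h; rw [h]
  -- U * R is lower triangular
  have hdet2 : (U * R).det = ∑ k ∈ Icc 1 n, mustar k := by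
    have htri : (U * R).BlockTriangular OrderDual.toDual := by
      intro i j h
      have hij : i < j := h
      have hj : (j : ℕ) ≠ 0 := by
        have := Fin.lt_iff_val_lt_val.1 hij
        omega
      rw [hkey i j, if_neg hj, if_neg (Fin.ne_of_lt hij)]
    rw [Matrix.det_of_lowerTriangular _ htri]
    set z : Fin n := ⟨0, hn0⟩ with hz
    have h0 : z ∈ (univ : Finset (Fin n)) := Finset.mem_univ _
    rw [Finset.prod_eq_single z
      (fun i _ hi => by
        have hiv : (i : ℕ) ≠ 0 := fun h => hi (Fin.ext (by simp [hz, h]))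
        rw [hkey i i, if_neg hiv, if_pos rfl])
      (fun h => absurd h0 h)]
    rw [hkey z z, if_pos rfl]
    refine Finset.sum_congr rfl fun k hk => ?_
    show (if UnitaryDvd (0 + 1) k then mustar (k / (0 + 1)) else 0) = mustar k
    rw [zero_add, if_pos (udvd_one_left k), Nat.div_one]
  have : R.det = (U * R).det := by
    rw [Matrix.det_mul, hUdet, one_mul]
  rw [this, hdet2]
  rfl
end
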